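/- (Barenblatt's lemma, part 1.) Let Q be a quantity space over the scalar system ℝ>0, and let d, d₁, …, d_m, b₁, …, b_r ∈ Q be such that b₁, …, b_r are independent (λ • ∏ⱼ bⱼ^{kⱼ} = 1_Q with λ ∈ ℝ>0 and integers kⱼ implies all kⱼ = 0) and each dᵢ satisfies dᵢ ~ ∏ⱼ bⱼ^{c_{ij}} for some integers c_{ij} (so that [b₁], …, [b_r] is a basis for the dimension group generated by [d₁], …, [d_m], [b₁], …, [b_r]). Let Ψ be a quantity function assigning to each tuple (p₁, …, p_m, q₁, …, q_r) with pᵢ ~ dᵢ and qⱼ ~ bⱼ a quantity Ψ(p, q) ~ d. If Ψ has a covariant scalar representation, then [d] is dependent on [b₁], …, [b_r]: there exist integers k > 0 and k₁, …, k_r with d^k ~ ∏ⱼ bⱼ^{kⱼ}. -/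

import Mathlib

/-- A *scalable (commutative) monoid* over a scalar system `K ⊆ F`:
`K` is a subset of the field `F` closed under addition, containing `1`,
closed under multiplication and under inverses of nonzero elements
(so the nonzero elements of `K` form a group under multiplication),
together with a scalar multiplication `smul` satisfying the axioms
`1 • q = q`, `α • (β • q) = (α β) • q` and `α • (q * q') = (α • q) * q'`
for scalars in `K`. -/
structure ScalableMonoid (F : Type*) [Field F] (Q : Type*) [CommMonoid Q] where
  K : Set F
  one_mem : (1 : F) ∈ K
  add_mem : ∀ {a b : F}, a ∈ K → b ∈ K → a + b ∈ K
  mul_mem : ∀ {a b : F}, a ∈ K → b ∈ K → a * b ∈ K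
  inv_mem : ∀ {a : F}, a ∈ K → a ≠ 0 → a⁻¹ ∈ K
  smul : F → Q → Q
  smul_one : ∀ q : Q, smul 1 q = q
  smul_smul : ∀ {a b : F}, a ∈ K → b ∈ K → ∀ q : Q, smul a (smul b q) = smul (a * b) q
  smul_mul : ∀ {a : F}, a ∈ K → ∀ q q' : Q, smul a (q * q') = smul a q * q'

/-- `b : Fin n → Qˣ` (a list of invertible quantities) is a basis for the scalable
monoid `M` if every quantity has a unique expansion `q = μ • ∏ i, b i ^ k i`
with `μ ∈ K` and integer exponents `k`. -/
def ScalableMonoid.IsBasis {F : Type*} [Field F] {Q : Type*} [CommMonoid Q]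
    (M : ScalableMonoid F Q) {n : ℕ} (b : Fin n → Qˣ) : Prop :=
  ∀ q : Q, ∃! p : M.K × (Fin n → ℤ),
    q = M.smul (p.1 : F) (↑(∏ i, b i ^ p.2 i) : Q)

/-- A quantity space is a scalable monoid having a (finite) basis. -/
def ScalableMonoid.IsQuantitySpace {F : Type*} [Field F] {Q : Type*} [CommMonoid Q]
    (M : ScalableMonoid F Q) : Prop :=
  ∃ (n : ℕ) (b : Fin n → Qˣ), M.IsBasis b

/-- The measure `μ_B(q)`: the unique scalar in the expansion of `q` relative to
the basis `B`. -/
noncomputable def ScalableMonoid.measure {F : Type*} [Field F] {Q : Type*} [CommMonoid Q]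
    (M : ScalableMonoid F Q) {n : ℕ} {b : Fin n → Qˣ} (hB : M.IsBasis b) (q : Q) : F :=
  ((hB q).choose.1 : F)

/-- Quantities `q, q'` are equidimensional (`q ~ q'`) if `α • q = β • q'`
for some scalars `α, β ∈ K`. -/
def ScalableMonoid.Equidim {F : Type*} [Field F] {Q : Type*} [CommMonoid Q]
    (M : ScalableMonoid F Q) (q q' : Q) : Prop :=
  ∃ α β : F, α ∈ M.K ∧ β ∈ M.K ∧ M.smul α q = M.smul β q'

namespace Barenblatt

variable {Q : Type*} [CommMonoid Q] (M : ScalableMonoid ℝ Q) (hK : M.K = {x : ℝ | 0 < x})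

include hK in
lemma memK {a : ℝ} (ha : 0 < a) : a ∈ M.K := by rw [hK]; exact ha

include hK in
lemma posK {a : ℝ} (ha : a ∈ M.K) : 0 < a := by rw [hK] at ha; exact ha

/-- smul distributes over products of smuls. -/
lemma smul_mul_smul {a c : ℝ} (ha : a ∈ M.K) (hc : c ∈ M.K) (q q' : Q) :
    M.smul a q * M.smul c q' = M.smul (a * c) (q * q') := by
  rw [← M.smul_mul ha, mul_comm q, ← M.smul_mul hc, M.smul_smul ha hc, mul_comm q']

/-- The exponent vector of `q` relative to a basis. -/
noncomputable def expv {n : ℕ} {e : Fin n → Qˣ} (hB : M.IsBasis e) (q : Q) : Fin n → ℤ :=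
  (hB q).choose.2

lemma meas_mem {n : ℕ} {e : Fin n → Qˣ} (hB : M.IsBasis e) (q : Q) :
    M.measure hB q ∈ M.K := (hB q).choose.1.2

lemma expansion {n : ℕ} {e : Fin n → Qˣ} (hB : M.IsBasis e) (q : Q) :
    q = M.smul (M.measure hB q) (↑(∏ i, e i ^ expv M hB q i) : Q) :=
  (hB q).choose_spec.1

lemma unique_exp {n : ℕ} {e : Fin n → Qˣ} (hB : M.IsBasis e) {q : Q} {μ : ℝ}
    (hμ : μ ∈ M.K) {kv : Fin n → ℤ}
    (h : q = M.smul μ (↑(∏ i, e i ^ kv i) : Q)) :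
    μ = M.measure hB q ∧ kv = expv M hB q := by
  have h2 := (hB q).choose_spec.2 (⟨μ, hμ⟩, kv) h
  exact ⟨congrArg (fun p => (p.1 : ℝ)) h2, congrArg Prod.snd h2⟩

lemma expv_smul {n : ℕ} {e : Fin n → Qˣ} (hB : M.IsBasis e) {α : ℝ} (hα : α ∈ M.K) (q : Q) :
    expv M hB (M.smul α q) = expv M hB q ∧
      M.measure hB (M.smul α q) = α * M.measure hB q := by
  have h := expansion M hB q
  have h2 : M.smul α q = M.smul (α * M.measure hB q) (↑(∏ i, e i ^ expv M hB q i) : Q) := by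
    conv_lhs => rw [h]
    rw [M.smul_smul hα (meas_mem M hB q)]
  obtain ⟨h3, h4⟩ := unique_exp M hB (M.mul_mem hα (meas_mem M hB q)) h2
  exact ⟨h4.symm, h3.symm⟩

/-- Equidimensionality is equivalent to equality of exponent vectors. -/
lemma equidim_iff {n : ℕ} {e : Fin n → Qˣ} (hB : M.IsBasis e) (q q' : Q) :
    M.Equidim q q' ↔ expv M hB q = expv M hB q' := by
  constructor
  · rintro ⟨α, β, hα, hβ, hab⟩
    have h1 := (expv_smul M hB hα q).1
    have h2 := (expv_smul M hB hβ q').1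
    rw [← h1, ← h2, hab]
  · intro h
    refine ⟨M.measure hB q', M.measure hB q, meas_mem M hB q', meas_mem M hB q, ?_⟩
    conv_lhs => rw [expansion M hB q]
    conv_rhs => rw [expansion M hB q']
    rw [M.smul_smul (meas_mem M hB q') (meas_mem M hB q),
      M.smul_smul (meas_mem M hB q) (meas_mem M hB q'), mul_comm, h]

lemma expv_mul {n : ℕ} {e : Fin n → Qˣ} (hB : M.IsBasis e) (q q' : Q) :
    expv M hB (q * q') = expv M hB q + expv M hB q' ∧
      M.measure hB (q * q') = M.measure hB q * M.measure hB q' := by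
  have h : q * q' = M.smul (M.measure hB q * M.measure hB q')
      (↑(∏ i, e i ^ (expv M hB q i + expv M hB q' i)) : Q) := by
    conv_lhs => rw [expansion M hB q, expansion M hB q']
    rw [smul_mul_smul M (meas_mem M hB q) (meas_mem M hB q')]
    congr 1
    rw [← Units.val_mul, ← Finset.prod_mul_distrib]
    exact congrArg Units.val (Finset.prod_congr rfl fun i _ => (zpow_add (e i) _ _).symm)
  obtain ⟨h1, h2⟩ := unique_exp M hB (M.mul_mem (meas_mem M hB q) (meas_mem M hB q')) h
  exact ⟨h2.symm, h1.symm⟩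

lemma expv_one {n : ℕ} {e : Fin n → Qˣ} (hB : M.IsBasis e) :
    expv M hB (1 : Q) = 0 ∧ M.measure hB (1 : Q) = 1 := by
  have h : (1 : Q) = M.smul 1 (↑(∏ i, e i ^ (0 : Fin n → ℤ) i) : Q) := by
    simp [M.smul_one]
  obtain ⟨h1, h2⟩ := unique_exp M hB M.one_mem h
  exact ⟨h2.symm, h1.symm⟩

/-- `expv` as a monoid hom into `Multiplicative (Fin n → ℤ)`. -/
noncomputable def expHom {n : ℕ} {e : Fin n → Qˣ} (hB : M.IsBasis e) :
    Q →* Multiplicative (Fin n → ℤ) where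
  toFun q := Multiplicative.ofAdd (expv M hB q)
  map_one' := by show Multiplicative.ofAdd (expv M hB 1) = 1; rw [(expv_one M hB).1]; rfl
  map_mul' q q' := by
    show Multiplicative.ofAdd (expv M hB (q * q')) = _
    rw [(expv_mul M hB q q').1]; rfl

lemma expv_pow {n : ℕ} {e : Fin n → Qˣ} (hB : M.IsBasis e) (q : Q) (k : ℕ) :
    expv M hB (q ^ k) = k • expv M hB q := by
  have := map_pow (expHom M hB) q k
  have h2 : Multiplicative.toAdd ((expHom M hB) (q ^ k))
      = Multiplicative.toAdd ((expHom M hB) q ^ k) := by rw [this]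
  rw [toAdd_pow] at h2
  exact h2

lemma expv_prod_zpow {n : ℕ} {e : Fin n → Qˣ} (hB : M.IsBasis e)
    {r : ℕ} (b : Fin r → Qˣ) (kv : Fin r → ℤ) :
    expv M hB (↑(∏ j, b j ^ kv j) : Q) = ∑ j, kv j • expv M hB (↑(b j) : Q) := by
  have g := (expHom M hB).comp (Units.coeHom Q)
  have h1 : ((expHom M hB).comp (Units.coeHom Q)) (∏ j, b j ^ kv j)
      = ∏ j, ((expHom M hB).comp (Units.coeHom Q)) (b j) ^ kv j := by
    rw [map_prod]
    congr 1; funext j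
    exact map_zpow _ _ _
  have h2 := congrArg Multiplicative.toAdd h1
  rw [toAdd_prod] at h2
  simp only [toAdd_zpow] at h2
  exact h2

/-- The quantity `a • 1`. -/
noncomputable def su (a : ℝ) : Q := M.smul a 1

lemma smul_eq_su_mul {a : ℝ} (ha : a ∈ M.K) (q : Q) : M.smul a q = su M a * q := by
  unfold su; rw [← M.smul_mul ha, one_mul]

lemma su_mul {a c : ℝ} (ha : a ∈ M.K) (hc : c ∈ M.K) :
    su M a * su M c = su M (a * c) := by
  unfold su; rw [smul_mul_smul M ha hc, one_mul]

lemma su_one : su M (1 : ℝ) = 1 := M.smul_one 1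

include hK in
lemma su_mul_inv {a : ℝ} (ha : 0 < a) : su M a * su M a⁻¹ = 1 := by
  rw [su_mul M (memK M hK ha) (memK M hK (inv_pos.2 ha)), mul_inv_cancel₀ ha.ne',
    su_one]

/-- The unit `a • 1` for `a > 0`. -/
noncomputable def sU {a : ℝ} (ha : 0 < a) : Qˣ :=
  ⟨su M a, su M a⁻¹, su_mul_inv M hK ha, by
    rw [mul_comm]; exact su_mul_inv M hK ha⟩

include hK in
lemma sU_zpow {a : ℝ} (ha : 0 < a) (z : ℤ) :
    ((sU M hK ha ^ z : Qˣ) : Q) = su M (a ^ z) := by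
  induction z using Int.induction_on with
  | zero => simp [su_one M]
  | succ k ih =>
      rw [zpow_add_one, Units.val_mul, ih]
      show _ * su M a = _
      rw [su_mul M (memK M hK (zpow_pos ha _)) (memK M hK ha),
        ← zpow_add_one₀ ha.ne']
  | pred k ih =>
      rw [zpow_sub_one, Units.val_mul, ih]
      show _ * su M a⁻¹ = _
      rw [su_mul M (memK M hK (zpow_pos ha _)) (memK M hK (inv_pos.2 ha))]
      rw [← zpow_sub_one₀ ha.ne']

include hK in
lemma su_prod {ι : Type*} (s : Finset ι) (f : ι → ℝ) (hf : ∀ t ∈ s, 0 < f t) :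
    ∏ t ∈ s, su M (f t) = su M (∏ t ∈ s, f t) := by
  induction s using Finset.cons_induction with
  | empty => simp [su_one M]
  | cons a s ha ih =>
      rw [Finset.prod_cons, Finset.prod_cons,
        ih fun t ht => hf t (Finset.mem_cons_of_mem ht),
        su_mul M (memK M hK (hf a (Finset.mem_cons_self a s)))
          (memK M hK (Finset.prod_pos fun t ht => hf t (Finset.mem_cons_of_mem ht)))]

include hK in
lemma scaled_prod {n : ℕ} (e : Fin n → Qˣ) (α : Fin n → ℝ) (hα : ∀ t, 0 < α t)
    (k : Fin n → ℤ) :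
    (↑(∏ t, (sU M hK (hα t) * e t) ^ k t) : Q)
      = M.smul (∏ t, α t ^ k t) (↑(∏ t, e t ^ k t) : Q) := by
  have h1 : (∏ t, (sU M hK (hα t) * e t) ^ k t)
      = (∏ t, sU M hK (hα t) ^ k t) * ∏ t, e t ^ k t := by
    rw [← Finset.prod_mul_distrib]
    exact Finset.prod_congr rfl fun t _ => mul_zpow _ _ _
  rw [h1, Units.val_mul]
  have h2 : ((∏ t, sU M hK (hα t) ^ k t : Qˣ) : Q) = su M (∏ t, α t ^ k t) := by
    rw [← su_prod M hK Finset.univ _ (fun t _ => zpow_pos (hα t) _)]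
    exact (map_prod (Units.coeHom Q) _ _).trans
      (Finset.prod_congr rfl fun t _ => sU_zpow M hK (hα t) (k t))
  rw [h2, ← smul_eq_su_mul M (memK M hK (Finset.prod_pos fun t _ => zpow_pos (hα t) _))]

include hK in
lemma scaled_isBasis {n : ℕ} {e : Fin n → Qˣ} (hB : M.IsBasis e)
    (α : Fin n → ℝ) (hα : ∀ t, 0 < α t) :
    M.IsBasis (fun t => sU M hK (hα t) * e t) := by
  intro q
  have hμpos := posK M hK (meas_mem M hB q)
  have hP : (0:ℝ) < ∏ t, α t ^ expv M hB q t :=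
    Finset.prod_pos fun t _ => zpow_pos (hα t) _
  refine ⟨(⟨M.measure hB q * (∏ t, α t ^ expv M hB q t)⁻¹,
      memK M hK (mul_pos hμpos (inv_pos.2 hP))⟩, expv M hB q), ?_, ?_⟩
  · show q = M.smul _ _
    rw [scaled_prod M hK e α hα,
      M.smul_smul (memK M hK (mul_pos hμpos (inv_pos.2 hP))) (memK M hK hP),
      inv_mul_cancel_right₀ hP.ne']
    exact expansion M hB q
  · rintro ⟨⟨μ', hμ'⟩, k'⟩ h
    have hP' : (0:ℝ) < ∏ t, α t ^ k' t := Finset.prod_pos fun t _ => zpow_pos (hα t) _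
    simp only at h
    rw [scaled_prod M hK e α hα, M.smul_smul hμ' (memK M hK hP')] at h
    obtain ⟨h1, h2⟩ := unique_exp M hB (M.mul_mem hμ' (memK M hK hP')) h
    have h3 : μ' = M.measure hB q * (∏ t, α t ^ expv M hB q t)⁻¹ := by
      rw [← h1, ← h2]
      field_simp
    exact Prod.ext (Subtype.ext h3) h2

include hK in
lemma scaled_measure {n : ℕ} {e : Fin n → Qˣ} (hB : M.IsBasis e)
    (α : Fin n → ℝ) (hα : ∀ t, 0 < α t)
    (hB' : M.IsBasis (fun t => sU M hK (hα t) * e t)) (q : Q) :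
    M.measure hB' q = M.measure hB q * (∏ t, α t ^ expv M hB q t)⁻¹ := by
  have hμpos := posK M hK (meas_mem M hB q)
  have hP : (0:ℝ) < ∏ t, α t ^ expv M hB q t :=
    Finset.prod_pos fun t _ => zpow_pos (hα t) _
  have h : q = M.smul (M.measure hB q * (∏ t, α t ^ expv M hB q t)⁻¹)
      (↑(∏ t, (sU M hK (hα t) * e t) ^ expv M hB q t) : Q) := by
    rw [scaled_prod M hK e α hα,
      M.smul_smul (memK M hK (mul_pos hμpos (inv_pos.2 hP))) (memK M hK hP),
      inv_mul_cancel_right₀ hP.ne']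
    exact expansion M hB q
  exact (unique_exp M hB' (memK M hK (mul_pos hμpos (inv_pos.2 hP))) h).1.symm

end Barenblatt

open Barenblatt

/-- Barenblatt's lemma, part 1: in a quantity space over the
positive reals, let `b₁, …, b_r` be independent and let each `dᵢ` satisfy
`dᵢ ~ ∏ⱼ bⱼ^{c_ij}`. If a quantity function `Ψ` taking admissible tuples
(`pᵢ ~ dᵢ`, `qⱼ ~ bⱼ`) to quantities `~ d` has a covariant scalar
representation, then `[d]` is dependent on `[b₁], …, [b_r]`: `d^k ~ ∏ bⱼ^{kⱼ}`
for some `k > 0` and integers `kⱼ`. -/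
theorem barenblatt_lemma_part1 {Q : Type*} [CommMonoid Q]
    (M : ScalableMonoid ℝ Q) (hK : M.K = {x : ℝ | 0 < x})
    (hQS : M.IsQuantitySpace)
    {m r : ℕ} (d : Q) (dd : Fin m → Q) (b : Fin r → Qˣ)
    (hb : ∀ lam : ℝ, lam ∈ M.K → ∀ kv : Fin r → ℤ,
      M.smul lam (↑(∏ j, b j ^ kv j) : Q) = 1 → kv = 0)
    (hdd : ∀ i, ∃ cv : Fin r → ℤ, M.Equidim (dd i) (↑(∏ j, b j ^ cv j) : Q))
    (Ψ : (Fin m → Q) → (Fin r → Q) → Q)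
    (hΨ : ∀ (p : Fin m → Q) (q : Fin r → Q),
      (∀ i, M.Equidim (p i) (dd i)) → (∀ j, M.Equidim (q j) ↑(b j)) →
      M.Equidim (Ψ p q) d)
    (hcov : ∃ ψ : (Fin m → ℝ) → (Fin r → ℝ) → ℝ,
      ∀ {nB : ℕ} {bB : Fin nB → Qˣ} (hB : M.IsBasis bB)
        (p : Fin m → Q) (q : Fin r → Q),
        (∀ i, M.Equidim (p i) (dd i)) → (∀ j, M.Equidim (q j) ↑(b j)) →
        ψ (fun i => M.measure hB (p i)) (fun j => M.measure hB (q j)) =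
          M.measure hB (Ψ p q)) :
    ∃ k : ℕ, 0 < k ∧ ∃ kv : Fin r → ℤ,
      M.Equidim (d ^ k) (↑(∏ j, b j ^ kv j) : Q) := by
  clear hb
  obtain ⟨n, e, hB⟩ := hQS
  obtain ⟨ψ, hψ⟩ := hcov
  set qf : Fin r → Q := fun j => ↑(b j) with hqf
  have hpr : ∀ i, M.Equidim (dd i) (dd i) :=
    fun i => ⟨1, 1, M.one_mem, M.one_mem, rfl⟩
  have hqr : ∀ j, M.Equidim (qf j) ↑(b j) :=
    fun j => ⟨1, 1, M.one_mem, M.one_mem, rfl⟩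
  set D : Fin n → ℤ := expv M hB d with hD
  set E : Fin r → Fin n → ℤ := fun j => expv M hB (↑(b j) : Q) with hE
  -- each dd i has exponents in the ℤ-span of the E j
  have hDi : ∀ i, ∃ cv : Fin r → ℤ, expv M hB (dd i) = ∑ j, cv j • E j := by
    intro i
    obtain ⟨cv, hcv⟩ := hdd i
    exact ⟨cv, ((equidim_iff M hB _ _).1 hcv).trans (expv_prod_zpow M hB b cv)⟩
  have hΨd : expv M hB (Ψ dd qf) = D := (equidim_iff M hB _ _).1 (hΨ dd qf hpr hqr)
  -- the main claim : D is in the ℚ-span of the E j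
  have key : (fun t => (D t : ℚ)) ∈
      Submodule.span ℚ (Set.range fun j => (fun t => (E j t : ℚ))) := by
    by_contra hDmem
    set S := Submodule.span ℚ (Set.range fun j => (fun t => (E j t : ℚ))) with hS
    have hπD : S.mkQ (fun t => (D t : ℚ)) ≠ 0 := fun h =>
      hDmem ((Submodule.Quotient.mk_eq_zero S).1 (by rwa [Submodule.mkQ_apply] at h))
    have : ∃ f : Module.Dual ℚ ((Fin n → ℚ) ⧸ S), f (S.mkQ fun t => (D t : ℚ)) ≠ 0 := by
      by_contra hf
      push_neg at hf
      exact hπD ((Module.forall_dual_apply_eq_zero_iff ℚ _).1 hf)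
    obtain ⟨f, hf⟩ := this
    set g : (Fin n → ℚ) →ₗ[ℚ] ℚ := f.comp S.mkQ with hg
    have hgE : ∀ j, g (fun t => (E j t : ℚ)) = 0 := by
      intro j
      have hmem : (fun t => (E j t : ℚ)) ∈ S := Submodule.subset_span ⟨j, rfl⟩
      simp [hg, LinearMap.comp_apply, (Submodule.Quotient.mk_eq_zero S).2 hmem]
    have hgD : g (fun t => (D t : ℚ)) ≠ 0 := hf
    -- the functional kills every integer vector in the span of the E j
    have hgz : ∀ i, g (fun t => (expv M hB (dd i) t : ℚ)) = 0 := by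
      intro i
      obtain ⟨cv, hcv⟩ := hDi i
      have : (fun t => (expv M hB (dd i) t : ℚ)) = ∑ j, (cv j : ℚ) • (fun t => (E j t : ℚ)) := by
        funext t
        rw [hcv]
        simp only [Finset.sum_apply, Pi.smul_apply, smul_eq_mul]
        push_cast
        rfl
      rw [this, map_sum]
      simp [hgE]
    -- scaling vector
    set v : Fin n → ℝ := fun t => ((g fun s => if t = s then 1 else 0 : ℚ) : ℝ) with hv
    have hsum : ∀ z : Fin n → ℤ, ∑ t, (z t : ℝ) * v t = ((g fun t => (z t : ℚ)) : ℝ) := by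
      intro z
      rw [LinearMap.pi_apply_eq_sum_univ g (fun t => (z t : ℚ))]
      push_cast [smul_eq_mul]
      rfl
    set α : Fin n → ℝ := fun t => Real.exp (v t) with hα
    have hαpos : ∀ t, 0 < α t := fun t => Real.exp_pos _
    have hPz : ∀ z : Fin n → ℤ, ∏ t, α t ^ z t = Real.exp ((g fun t => (z t : ℚ)) : ℝ) := by
      intro z
      rw [← hsum z, Real.exp_sum]
      exact Finset.prod_congr rfl fun t _ => by
        rw [hα, ← Real.rpow_intCast, ← Real.exp_mul, mul_comm]
    have hB' := scaled_isBasis M hK hB α hαpos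
    have hcov1 := hψ hB dd qf hpr hqr
    have hcov2 := hψ hB' dd qf hpr hqr
    have hmdd : ∀ i, M.measure hB' (dd i) = M.measure hB (dd i) := by
      intro i
      rw [scaled_measure M hK hB α hαpos hB', hPz, hgz i]
      simp
    have hmqf : ∀ j, M.measure hB' (qf j) = M.measure hB (qf j) := by
      intro j
      rw [scaled_measure M hK hB α hαpos hB', hPz]
      have : expv M hB (qf j) = E j := rfl
      rw [this, hgE j]
      simp
    have hmΨ : M.measure hB' (Ψ dd qf) =
        M.measure hB (Ψ dd qf) * (Real.exp ((g fun t => (D t : ℚ)) : ℝ))⁻¹ := by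
      rw [scaled_measure M hK hB α hαpos hB', hΨd, hPz]
    rw [show (fun i => M.measure hB' (dd i)) = (fun i => M.measure hB (dd i)) from
        funext hmdd,
      show (fun j => M.measure hB' (qf j)) = (fun j => M.measure hB (qf j)) from
        funext hmqf, hcov1, hmΨ] at hcov2
    have hw : (0:ℝ) < M.measure hB (Ψ dd qf) := posK M hK (meas_mem M hB _)
    have h9 : (1:ℝ) = (Real.exp ((g fun t => (D t : ℚ)) : ℝ))⁻¹ :=
      mul_left_cancel₀ hw.ne' (by rw [mul_one]; exact hcov2)
    have hexp1 : Real.exp ((g fun t => (D t : ℚ)) : ℝ) = 1 :=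
      inv_eq_one.1 h9.symm
    have : ((g fun t => (D t : ℚ)) : ℝ) = 0 := (Real.exp_eq_one_iff _).1 hexp1
    exact hgD (by exact_mod_cast this)
  obtain ⟨c, hc⟩ := (Submodule.mem_span_range_iff_exists_fun ℚ).1 key
  set k : ℕ := ∏ j, (c j).den with hk
  have hkpos : 0 < k := Finset.prod_pos fun j _ => (c j).pos
  have hdvd : ∀ j, ((c j).den : ℤ) ∣ (k : ℤ) := fun j =>
    Int.natCast_dvd_natCast.2 (Finset.dvd_prod_of_mem _ (Finset.mem_univ j))
  set kv : Fin r → ℤ := fun j => (c j).num * ((k : ℤ) / ((c j).den : ℤ)) with hkv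
  have hkc : ∀ j, (kv j : ℚ) = c j * k := by
    intro j
    have hden0 : ((c j).den : ℚ) ≠ 0 := by
      exact_mod_cast (c j).den_nz
    have h1 : ((((k : ℤ) / ((c j).den : ℤ)) : ℤ) : ℚ) = (k : ℚ) / ((c j).den : ℚ) := by
      have h2 := Int.ediv_mul_cancel (hdvd j)
      have h3 : ((((k:ℤ) / ((c j).den:ℤ)) * ((c j).den:ℤ) : ℤ) : ℚ) = ((k:ℤ):ℚ) := by
        rw [h2]
      push_cast at h3
      field_simp
      linarith [h3]
    rw [hkv]
    push_cast [h1]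
    conv_rhs => rw [← Rat.num_div_den (c j)]
    ring
  have hfin : ∀ t, (k:ℤ) * D t = ∑ j, kv j * E j t := by
    intro t
    have h4 := congrFun hc t
    simp only [Finset.sum_apply, Pi.smul_apply, smul_eq_mul] at h4
    have h5 : (k:ℚ) * (D t : ℚ) = ∑ j, (kv j : ℚ) * (E j t : ℚ) := by
      rw [← h4, Finset.mul_sum]
      exact Finset.sum_congr rfl fun j _ => by rw [hkc j]; ring
    exact_mod_cast h5
  refine ⟨k, hkpos, kv, ?_⟩
  rw [equidim_iff M hB, expv_pow M hB, expv_prod_zpow M hB]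
  funext t
  simp only [Pi.smul_apply, Finset.sum_apply, smul_eq_mul, nsmul_eq_mul]
  exact_mod_cast hfin t
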